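/- Fix k > 0. The function α_*(ξ) = −√(i(ξ−k))·√(−i(ξ+k)) satisfies: (i) α_* is complex-analytic on ℂ∖({−k+is : s ≤ 0} ∪ {k+is : s ≥ 0}); (ii) for real ξ with |ξ| < k, α_*(ξ) = i√(k²−ξ²); (iii) for real ξ with |ξ| > k, α_*(ξ) = −√(ξ²−k²); (iv) for every ξ ∈ ℂ with Re ξ · Im ξ ≤ 0 (i.e., ξ in the union of the closed second and fourth quadrants), Re α_*(ξ) ≤ 0 and Im α_*(ξ) ≥ 0. -/
import Mathlib


open MeasureTheory Set

noncomputable section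

/-- The branch cuts `B = {-k+is : s ≤ 0} ∪ {k+is : s ≥ 0}` of `α_*`. -/
def branchCuts (k : ℝ) : Set ℂ :=
  {z | z.re = -k ∧ z.im ≤ 0} ∪ {z | z.re = k ∧ 0 ≤ z.im}

/-- The function `α_*(ξ) = -√(i(ξ-k))·√(-i(ξ+k))`, with principal square roots. -/
noncomputable def alphaStar (k : ℝ) (ξ : ℂ) : ℂ :=
  -((Complex.I * (ξ - k)) ^ (1/2 : ℂ) * ((-Complex.I) * (ξ + k)) ^ (1/2 : ℂ))

/-- The real part of a principal square root is nonnegative. -/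
lemma sqrt_re_nonneg' (z : ℂ) : 0 ≤ (z ^ (1/2 : ℂ)).re := by
  rcases eq_or_ne z 0 with h | h
  · simp [h, Complex.zero_cpow (by norm_num : (1/2:ℂ) ≠ 0)]
  · rw [Complex.cpow_def_of_ne_zero h, Complex.exp_re]
    apply mul_nonneg (Real.exp_nonneg _)
    have him : (Complex.log z * (1/2 : ℂ)).im = z.arg / 2 := by
      simp [Complex.mul_im, Complex.log_im]; ring
    rw [him]
    apply Real.cos_nonneg_of_mem_Icc
    constructor
    · linarith [Complex.neg_pi_lt_arg z]
    · linarith [Complex.arg_le_pi z]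

/-- The principal square root squares back to the original number. -/
lemma sq_sqrt'' (z : ℂ) : (z ^ (1/2 : ℂ))^2 = z := by
  have := Complex.cpow_nat_inv_pow z (two_ne_zero)
  norm_num at this
  exact this

/-- Uniqueness of the principal square root. -/
lemma sqrt_sq_eq' {w : ℂ} (hw : 0 < w.re) : (w^2) ^ (1/2 : ℂ) = w := by
  have h := sq_sqrt'' (w^2)
  have h2 : ((w^2)^(1/2:ℂ) - w) * ((w^2)^(1/2:ℂ) + w) = 0 := by linear_combination h
  rcases mul_eq_zero.mp h2 with h' | h'
  · exact sub_eq_zero.mp h'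
  · exfalso
    have he : (w^2)^(1/2:ℂ) = -w := by linear_combination h'
    have hre := sqrt_re_nonneg' (w^2)
    rw [he] at hre
    simp at hre
    linarith

lemma core0' (p q r s x k : ℝ) (hk : 0 < k) (hp : 0 ≤ p) (hr : 0 ≤ r)
    (e1 : p^2 - q^2 = 0) (e2 : 2*(p*q) = x - k) (e3 : r^2 - s^2 = 0) (e4 : 2*(r*s) = -(x+k)) :
    p*s + q*r ≤ 0 ∧ 0 ≤ p*r - q*s := by
  rcases eq_or_lt_of_le hp with hp0 | hp0
  · have hq2 : q^2 = 0 := by nlinarith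
    have hq : q = 0 := by
      have := sq_eq_zero_iff.mp hq2
      simpa using this
    simp [← hp0, hq]
  rcases eq_or_lt_of_le hr with hr0 | hr0
  · have hs2 : s^2 = 0 := by nlinarith
    have hs : s = 0 := by
      have := sq_eq_zero_iff.mp hs2
      simpa using this
    simp [← hr0, hs]
  have hqq : q = p ∨ q = -p := by
    have h : (q - p) * (q + p) = 0 := by nlinarith
    rcases mul_eq_zero.mp h with h | h
    · left; linarith
    · right; linarith
  have hss : s = r ∨ s = -r := by
    have h : (s - r) * (s + r) = 0 := by nlinarith
    rcases mul_eq_zero.mp h with h | h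
    · left; linarith
    · right; linarith
  rcases hqq with rfl | rfl <;> rcases hss with rfl | rfl <;>
    constructor <;> nlinarith [mul_pos hp0 hr0]

lemma core' (p q r s x y k : ℝ) (hk : 0 < k) (hp : 0 ≤ p) (hr : 0 ≤ r)
    (e1 : p^2 - q^2 = -y) (e2 : 2*(p*q) = x - k) (e3 : r^2 - s^2 = y) (e4 : 2*(r*s) = -(x+k))
    (hxy : x*y ≤ 0) :
    p*s + q*r ≤ 0 ∧ 0 ≤ p*r - q*s := by
  have key : (p*r - q*s) * (p*s + q*r) = x*y := by
    linear_combination (r*s)*e1 + (y/2)*e2 + (p*q)*e3 - (y/2)*e4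
  rcases lt_trichotomy y 0 with hy | hy | hy
  · have hx : 0 ≤ x := by
      by_contra h
      push_neg at h
      nlinarith [mul_pos_of_neg_of_neg h hy]
    have hrs : r*s < 0 := by nlinarith
    have hr' : 0 < r := lt_of_le_of_ne hr (by rintro rfl; simp at hrs)
    have hs : s < 0 := by nlinarith
    have hsr : r < -s := by nlinarith
    have hpq : q < p := by nlinarith
    have hp' : 0 < p := by nlinarith
    have h1 : p*s + q*r < 0 := by nlinarith
    refine ⟨le_of_lt h1, ?_⟩
    by_contra hcon
    push_neg at hcon
    nlinarith [mul_pos_of_neg_of_neg hcon h1]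
  · subst hy
    exact core0' p q r s x k hk hp hr (by linarith) e2 (by linarith) e4
  · have hx : x ≤ 0 := by
      by_contra h
      push_neg at h
      nlinarith [mul_pos h hy]
    have hpq' : p*q < 0 := by nlinarith
    have hp' : 0 < p := lt_of_le_of_ne hp (by rintro rfl; simp at hpq')
    have hq : q < 0 := by nlinarith
    have hqp : p < -q := by nlinarith
    have hr' : 0 < r := by nlinarith
    have hsr1 : -r < s := by nlinarith
    have hsr2 : s < r := by nlinarith
    have h1 : p*s + q*r < 0 := by nlinarith
    refine ⟨le_of_lt h1, ?_⟩
    by_contra hcon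
    push_neg at hcon
    nlinarith [mul_pos_of_neg_of_neg hcon h1]

/-- Properties of `α_*`: (i) analytic off the branch cuts;
(ii) `α_*(ξ) = i√(k²-ξ²)` for real `|ξ| < k`; (iii) `α_*(ξ) = -√(ξ²-k²)` for real
`|ξ| > k`; (iv) for `ξ` in the closed second and fourth quadrants,
`Re α_*(ξ) ≤ 0` and `Im α_*(ξ) ≥ 0`. -/
theorem statement_11 (k : ℝ) (hk : 0 < k) :
    AnalyticOnNhd ℂ (alphaStar k) (branchCuts k)ᶜ ∧
    (∀ ξ : ℝ, |ξ| < k →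
      alphaStar k (ξ : ℂ) = Complex.I * Real.sqrt (k ^ 2 - ξ ^ 2)) ∧
    (∀ ξ : ℝ, k < |ξ| →
      alphaStar k (ξ : ℂ) = -(Real.sqrt (ξ ^ 2 - k ^ 2) : ℂ)) ∧
    (∀ ξ : ℂ, ξ.re * ξ.im ≤ 0 →
      (alphaStar k ξ).re ≤ 0 ∧ 0 ≤ (alphaStar k ξ).im) := by
  refine ⟨?_, ?_, ?_, ?_⟩
  · -- (i) analyticity
    intro ξ hξ
    simp only [branchCuts, Set.mem_compl_iff, Set.mem_union, Set.mem_setOf_eq, not_or,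
      not_and] at hξ
    obtain ⟨h1, h2⟩ := hξ
    apply AnalyticAt.neg
    apply AnalyticAt.mul
    · apply AnalyticAt.cpow
      · exact analyticAt_const.mul (analyticAt_id.sub analyticAt_const)
      · exact analyticAt_const
      · rw [Complex.mem_slitPlane_iff]
        by_cases hre : ξ.re = k
        · left
          have := h2 hre
          simp [Complex.mul_re, Complex.sub_im]
          linarith [lt_of_not_ge this]
        · right
          simp [Complex.mul_im, Complex.sub_re]
          intro h
          exact hre (by linarith)
    · apply AnalyticAt.cpow
      · exact analyticAt_const.mul (analyticAt_id.add analyticAt_const)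
      · exact analyticAt_const
      · rw [Complex.mem_slitPlane_iff]
        by_cases hre : ξ.re = -k
        · left
          have := h1 hre
          simp [Complex.mul_re, Complex.add_im]
          linarith [lt_of_not_ge this]
        · right
          simp [Complex.mul_im, Complex.add_re]
          intro h
          exact hre (by linarith)
  · -- (ii) evaluation on (-k, k)
    intro ξ hξ
    rw [abs_lt] at hξ
    set c : ℝ := Real.sqrt ((k - ξ)/2) with hc
    set d : ℝ := Real.sqrt ((ξ + k)/2) with hd
    have hc0 : 0 < c := Real.sqrt_pos.mpr (by linarith)
    have hd0 : 0 < d := Real.sqrt_pos.mpr (by linarith)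
    have hc2 : (c:ℂ)^2 = (((k - ξ)/2 : ℝ) : ℂ) := by
      rw [← Complex.ofReal_pow, Real.sq_sqrt (by linarith : (0:ℝ) ≤ (k - ξ)/2)]
    have hd2 : (d:ℂ)^2 = (((ξ + k)/2 : ℝ) : ℂ) := by
      rw [← Complex.ofReal_pow, Real.sq_sqrt (by linarith : (0:ℝ) ≤ (ξ + k)/2)]
    have hu : (Complex.I * ((ξ:ℂ) - k)) ^ (1/2:ℂ) = (c:ℂ) * (1 - Complex.I) := by
      have hsq : ((c:ℂ) * (1 - Complex.I))^2 = Complex.I * ((ξ:ℂ) - k) := by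
        push_cast at hc2 ⊢
        linear_combination (1-Complex.I)^2 * hc2 + (((k:ℂ)-(ξ:ℂ))/2) * Complex.I_sq
      rw [← hsq]
      apply sqrt_sq_eq'
      simp [Complex.mul_re, Complex.sub_re, Complex.sub_im]
      exact hc0
    have hv : ((-Complex.I) * ((ξ:ℂ) + k)) ^ (1/2:ℂ) = (d:ℂ) * (1 - Complex.I) := by
      have hsq : ((d:ℂ) * (1 - Complex.I))^2 = (-Complex.I) * ((ξ:ℂ) + k) := by
        push_cast at hd2 ⊢
        linear_combination (1-Complex.I)^2 * hd2 + (((ξ:ℂ)+(k:ℂ))/2) * Complex.I_sq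
      rw [← hsq]
      apply sqrt_sq_eq'
      simp [Complex.mul_re, Complex.sub_re, Complex.sub_im]
      exact hd0
    have hcd : Real.sqrt (k^2 - ξ^2) = 2*(c*d) := by
      have h1 : (2*(c*d))^2 = k^2 - ξ^2 := by
        have : c^2 = (k - ξ)/2 := Real.sq_sqrt (by linarith)
        have : d^2 = (ξ + k)/2 := Real.sq_sqrt (by linarith)
        nlinarith [Real.sq_sqrt (by linarith : (0:ℝ) ≤ (k - ξ)/2),
          Real.sq_sqrt (by linarith : (0:ℝ) ≤ (ξ + k)/2)]
      rw [← h1, Real.sqrt_sq (by positivity)]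
    rw [alphaStar, hu, hv, hcd]
    push_cast
    linear_combination (-(c:ℂ)*(d:ℂ))*Complex.I_sq
  · -- (iii) evaluation for |ξ| > k
    intro ξ hξ
    rw [lt_abs] at hξ
    rcases hξ with hξ | hξ
    · -- ξ > k
      set c : ℝ := Real.sqrt ((ξ - k)/2) with hc
      set d : ℝ := Real.sqrt ((ξ + k)/2) with hd
      have hc0 : 0 < c := Real.sqrt_pos.mpr (by linarith)
      have hd0 : 0 < d := Real.sqrt_pos.mpr (by linarith)
      have hc2 : (c:ℂ)^2 = (((ξ - k)/2 : ℝ) : ℂ) := by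
        rw [← Complex.ofReal_pow, Real.sq_sqrt (by linarith : (0:ℝ) ≤ (ξ - k)/2)]
      have hd2 : (d:ℂ)^2 = (((ξ + k)/2 : ℝ) : ℂ) := by
        rw [← Complex.ofReal_pow, Real.sq_sqrt (by linarith : (0:ℝ) ≤ (ξ + k)/2)]
      have hu : (Complex.I * ((ξ:ℂ) - k)) ^ (1/2:ℂ) = (c:ℂ) * (1 + Complex.I) := by
        have hsq : ((c:ℂ) * (1 + Complex.I))^2 = Complex.I * ((ξ:ℂ) - k) := by
          push_cast at hc2 ⊢
          linear_combination (1+Complex.I)^2 * hc2 + (((ξ:ℂ)-(k:ℂ))/2) * Complex.I_sq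
        rw [← hsq]
        apply sqrt_sq_eq'
        simp [Complex.mul_re, Complex.add_re, Complex.add_im]
        exact hc0
      have hv : ((-Complex.I) * ((ξ:ℂ) + k)) ^ (1/2:ℂ) = (d:ℂ) * (1 - Complex.I) := by
        have hsq : ((d:ℂ) * (1 - Complex.I))^2 = (-Complex.I) * ((ξ:ℂ) + k) := by
          push_cast at hd2 ⊢
          linear_combination (1-Complex.I)^2 * hd2 + (((ξ:ℂ)+(k:ℂ))/2) * Complex.I_sq
        rw [← hsq]
        apply sqrt_sq_eq'
        simp [Complex.mul_re, Complex.sub_re, Complex.sub_im]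
        exact hd0
      have hcd : Real.sqrt (ξ^2 - k^2) = 2*(c*d) := by
        have h1 : (2*(c*d))^2 = ξ^2 - k^2 := by
          nlinarith [Real.sq_sqrt (by linarith : (0:ℝ) ≤ (ξ - k)/2),
            Real.sq_sqrt (by linarith : (0:ℝ) ≤ (ξ + k)/2)]
        rw [← h1, Real.sqrt_sq (by positivity)]
      rw [alphaStar, hu, hv, hcd]
      push_cast
      linear_combination ((c:ℂ)*(d:ℂ))*Complex.I_sq
    · -- ξ < -k
      set c : ℝ := Real.sqrt ((k - ξ)/2) with hc
      set d : ℝ := Real.sqrt (-(ξ + k)/2) with hd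
      have hc0 : 0 < c := Real.sqrt_pos.mpr (by linarith)
      have hd0 : 0 < d := Real.sqrt_pos.mpr (by linarith)
      have hc2 : (c:ℂ)^2 = (((k - ξ)/2 : ℝ) : ℂ) := by
        rw [← Complex.ofReal_pow, Real.sq_sqrt (by linarith : (0:ℝ) ≤ (k - ξ)/2)]
      have hd2 : (d:ℂ)^2 = ((-(ξ + k)/2 : ℝ) : ℂ) := by
        rw [← Complex.ofReal_pow, Real.sq_sqrt (by linarith : (0:ℝ) ≤ -(ξ + k)/2)]
      have hu : (Complex.I * ((ξ:ℂ) - k)) ^ (1/2:ℂ) = (c:ℂ) * (1 - Complex.I) := by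
        have hsq : ((c:ℂ) * (1 - Complex.I))^2 = Complex.I * ((ξ:ℂ) - k) := by
          push_cast at hc2 ⊢
          linear_combination (1-Complex.I)^2 * hc2 + (((k:ℂ)-(ξ:ℂ))/2) * Complex.I_sq
        rw [← hsq]
        apply sqrt_sq_eq'
        simp [Complex.mul_re, Complex.sub_re, Complex.sub_im]
        exact hc0
      have hv : ((-Complex.I) * ((ξ:ℂ) + k)) ^ (1/2:ℂ) = (d:ℂ) * (1 + Complex.I) := by
        have hsq : ((d:ℂ) * (1 + Complex.I))^2 = (-Complex.I) * ((ξ:ℂ) + k) := by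
          push_cast at hd2 ⊢
          linear_combination (1+Complex.I)^2 * hd2 - (((ξ:ℂ)+(k:ℂ))/2) * Complex.I_sq
        rw [← hsq]
        apply sqrt_sq_eq'
        simp [Complex.mul_re, Complex.add_re, Complex.add_im]
        exact hd0
      have hcd : Real.sqrt (ξ^2 - k^2) = 2*(c*d) := by
        have h1 : (2*(c*d))^2 = ξ^2 - k^2 := by
          nlinarith [Real.sq_sqrt (by linarith : (0:ℝ) ≤ (k - ξ)/2),
            Real.sq_sqrt (by linarith : (0:ℝ) ≤ -(ξ + k)/2)]
        rw [← h1, Real.sqrt_sq (by positivity)]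
      rw [alphaStar, hu, hv, hcd]
      push_cast
      linear_combination ((c:ℂ)*(d:ℂ))*Complex.I_sq
  · -- (iv) sign conditions on the closed second and fourth quadrants
    intro ξ hξ
    set u : ℂ := (Complex.I * (ξ - k)) ^ (1/2:ℂ) with hu
    set v : ℂ := ((-Complex.I) * (ξ + k)) ^ (1/2:ℂ) with hv
    have hu2 : u^2 = Complex.I * (ξ - k) := sq_sqrt'' _
    have hv2 : v^2 = (-Complex.I) * (ξ + k) := sq_sqrt'' _
    have e1 : u.re^2 - u.im^2 = -ξ.im := by
      have h := congrArg Complex.re hu2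
      simp [pow_two, Complex.mul_re, Complex.sub_re, Complex.sub_im] at h
      linarith [h]
    have e2 : 2*(u.re*u.im) = ξ.re - k := by
      have h := congrArg Complex.im hu2
      simp [pow_two, Complex.mul_im, Complex.sub_re, Complex.sub_im] at h
      linarith [h]
    have e3 : v.re^2 - v.im^2 = ξ.im := by
      have h := congrArg Complex.re hv2
      simp [pow_two, Complex.mul_re, Complex.add_re, Complex.add_im] at h
      linarith [h]
    have e4 : 2*(v.re*v.im) = -(ξ.re + k) := by
      have h := congrArg Complex.im hv2
      simp [pow_two, Complex.mul_im, Complex.add_re, Complex.add_im] at h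
      linarith [h]
    have hp : 0 ≤ u.re := sqrt_re_nonneg' _
    have hr : 0 ≤ v.re := sqrt_re_nonneg' _
    obtain ⟨hA, hB⟩ := core' u.re u.im v.re v.im ξ.re ξ.im k hk hp hr e1 e2 e3 e4 hξ
    constructor
    · show (-(u * v)).re ≤ 0
      simp [Complex.mul_re]
      linarith
    · show 0 ≤ (-(u * v)).im
      simp [Complex.mul_im]
      linarith

end
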